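/- arXiv:2109.13443 — 2 statements merged into one kernel-verified Lean document; each statement's English description precedes it below -/
import Mathlib

section
/- Let g, h, l be real vector spaces, {,} : h × h → l a bilinear map, ⟨,⟩_h a bilinear form on h, ⟨,⟩_l a bilinear form on l, and η₁, η₂ : l × h → h bilinear maps satisfying ⟨{Y, Y'}, Z⟩_l = − ⟨Y', η₁(Z, Y)⟩_h = − ⟨Y, η₂(Z, Y')⟩_h for all Y, Y' ∈ h, Z ∈ l. Define η̄ᵢ(C, B) := C ∧^{ηᵢ} B, the wedge via ηᵢ. Then for a real vector space V and alternating multilinear maps B₁ : V^{t₁} → h, B₂ : V^{t₂} → h, C : V^q → l, one has ⟨B₁ ∧^{{,}} B₂, C⟩ = (−1)^{t₁(t₂ + q) + 1} ⟨B₂, η̄₁(C, B₁)⟩ = (−1)^{t₂ q + 1} ⟨B₁, η̄₂(C, B₂)⟩ as alternating (t₁+t₂+q)-linear maps V^{t₁+t₂+q} → ℝ. -/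
/-- A (k, l)-shuffle: a permutation of `Fin (k + l)` that is strictly increasing on the
first `k` indices and on the last `l` indices. -/
def IsShuffle (k l : ℕ) (σ : Equiv.Perm (Fin (k + l))) : Prop :=
  (∀ i j : Fin k, i < j → σ (Fin.castAdd l i) < σ (Fin.castAdd l j)) ∧
  (∀ i j : Fin l, i < j → σ (Fin.natAdd k i) < σ (Fin.natAdd k j))

instance (k l : ℕ) (σ : Equiv.Perm (Fin (k + l))) : Decidable (IsShuffle k l σ) := by
  unfold IsShuffle; infer_instance

open Equiv Equiv.Perm Finset

section Key
variable {k l : ℕ}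

/-- Block permutation: acts as `e` on the first `k` coordinates and `f` on the last `l`. -/
def blockPerm (e : Perm (Fin k)) (f : Perm (Fin l)) : Perm (Fin (k + l)) :=
  finSumFinEquiv.permCongr (e.sumCongr f)

@[simp] lemma blockPerm_castAdd (e : Perm (Fin k)) (f : Perm (Fin l)) (i : Fin k) :
    blockPerm e f (Fin.castAdd l i) = Fin.castAdd l (e i) := by
  simp [blockPerm, Equiv.permCongr_apply]

@[simp] lemma blockPerm_natAdd (e : Perm (Fin k)) (f : Perm (Fin l)) (i : Fin l) :
    blockPerm e f (Fin.natAdd k i) = Fin.natAdd k (f i) := by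
  simp [blockPerm, Equiv.permCongr_apply]

lemma blockPerm_mul (e e' : Perm (Fin k)) (f f' : Perm (Fin l)) :
    blockPerm e f * blockPerm e' f' = blockPerm (e * e') (f * f') := by
  ext x : 1
  induction x using Fin.addCases with
  | left i => simp [Perm.mul_apply]
  | right i => simp [Perm.mul_apply]

@[simp] lemma blockPerm_one : blockPerm (1 : Perm (Fin k)) (1 : Perm (Fin l)) = 1 := by
  ext x : 1
  induction x using Fin.addCases with
  | left i => simp
  | right i => simp

@[simp] lemma sign_blockPerm (e : Perm (Fin k)) (f : Perm (Fin l)) :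
    sign (blockPerm e f) = sign e * sign f := by
  simp [blockPerm, sign_permCongr, sign_sumCongr]

/-- first sorting permutation of `π` -/
noncomputable def sort1 (π : Perm (Fin (k + l))) : Perm (Fin k) :=
  Tuple.sort (fun i => π (Fin.castAdd l i))

noncomputable def sort2 (π : Perm (Fin (k + l))) : Perm (Fin l) :=
  Tuple.sort (fun i => π (Fin.natAdd k i))

lemma natAdd_inj {a b : ℕ} : Function.Injective (Fin.natAdd a : Fin b → Fin (a + b)) := by
  intro x y hxy
  have := congrArg Fin.val hxy
  simp only [Fin.coe_natAdd] at this
  exact Fin.ext (by omega)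

lemma isShuffle_mul_blockPerm (π : Perm (Fin (k + l))) :
    IsShuffle k l (π * blockPerm (sort1 π) (sort2 π)) := by
  constructor
  · intro i j hij
    have hmono : Monotone ((fun i => π (Fin.castAdd l i)) ∘ (sort1 π)) :=
      Tuple.monotone_sort _
    have hinj : Function.Injective ((fun i => π (Fin.castAdd l i)) ∘ (sort1 π)) := by
      intro a b hab
      simp only [Function.comp] at hab
      exact (sort1 π).injective (Fin.castAdd_injective _ _ (π.injective hab))
    have := (hmono.strictMono_of_injective hinj) hij
    simpa [Perm.mul_apply, Function.comp] using this
  · intro i j hij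
    have hmono : Monotone ((fun i => π (Fin.natAdd k i)) ∘ (sort2 π)) :=
      Tuple.monotone_sort _
    have hinj : Function.Injective ((fun i => π (Fin.natAdd k i)) ∘ (sort2 π)) := by
      intro a b hab
      simp only [Function.comp] at hab
      exact (sort2 π).injective (natAdd_inj (π.injective hab))
    have := (hmono.strictMono_of_injective hinj) hij
    simpa [Perm.mul_apply, Function.comp] using this


lemma sort1_shuffle_mul (σ : Perm (Fin (k + l))) (hσ : IsShuffle k l σ)
    (e : Perm (Fin k)) (f : Perm (Fin l)) :
    sort1 (σ * blockPerm e f) = e⁻¹ := by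
  have hkey : ∀ i : Fin k,
      (σ * blockPerm e f) (Fin.castAdd l (e⁻¹ i)) = σ (Fin.castAdd l i) := by
    intro i; simp [Perm.mul_apply]
  have h : (e⁻¹ : Perm (Fin k)) =
      Tuple.sort (fun i => (σ * blockPerm e f) (Fin.castAdd l i)) := by
    rw [Tuple.eq_sort_iff]
    constructor
    · intro i j hij
      simp only [Function.comp]
      rw [hkey, hkey]
      rcases lt_or_eq_of_le hij with hlt | rfl
      · exact le_of_lt (hσ.1 _ _ hlt)
      · exact le_rfl
    · intro i j hij heq
      rw [hkey, hkey] at heq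
      exact absurd (Fin.castAdd_injective _ _ (σ.injective heq)) (ne_of_lt hij)
  rw [sort1, ← h]

lemma sort2_shuffle_mul (σ : Perm (Fin (k + l))) (hσ : IsShuffle k l σ)
    (e : Perm (Fin k)) (f : Perm (Fin l)) :
    sort2 (σ * blockPerm e f) = f⁻¹ := by
  have hkey : ∀ i : Fin l,
      (σ * blockPerm e f) (Fin.natAdd k (f⁻¹ i)) = σ (Fin.natAdd k i) := by
    intro i; simp [Perm.mul_apply]
  have h : (f⁻¹ : Perm (Fin l)) =
      Tuple.sort (fun i => (σ * blockPerm e f) (Fin.natAdd k i)) := by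
    rw [Tuple.eq_sort_iff]
    constructor
    · intro i j hij
      simp only [Function.comp]
      rw [hkey, hkey]
      rcases lt_or_eq_of_le hij with hlt | rfl
      · exact le_of_lt (hσ.2 _ _ hlt)
      · exact le_rfl
    · intro i j hij heq
      rw [hkey, hkey] at heq
      exact absurd (natAdd_inj (σ.injective heq)) (ne_of_lt hij)
  rw [sort2, ← h]

/-- KEY: summing over all permutations = summing over shuffles times block permutations. -/
lemma key_sum {M : Type*} [AddCommMonoid M] (F : Perm (Fin (k + l)) → M) :
    ∑ π : Perm (Fin (k + l)), F π =
      ∑ σ : Perm (Fin (k + l)), if IsShuffle k l σ then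
        ∑ e : Perm (Fin k), ∑ f : Perm (Fin l), F (σ * blockPerm e f) else 0 := by
  classical
  rw [← Finset.sum_filter]
  have h1 : ∀ σ ∈ Finset.univ.filter (IsShuffle k l),
      (∑ e : Perm (Fin k), ∑ f : Perm (Fin l), F (σ * blockPerm e f))
        = ∑ p ∈ (Finset.univ ×ˢ Finset.univ : Finset (Perm (Fin k) × Perm (Fin l))),
            F (σ * blockPerm p.1 p.2) := by
    intro σ _
    rw [Finset.sum_product]
  rw [Finset.sum_congr rfl h1, ← Finset.sum_product']
  symm
  refine Finset.sum_nbij' (i := fun x => x.1 * blockPerm x.2.1 x.2.2)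
    (j := fun π => (π * blockPerm (sort1 π) (sort2 π), (sort1 π)⁻¹, (sort2 π)⁻¹))
    ?_ ?_ ?_ ?_ ?_
  · intro a _; exact Finset.mem_univ _
  · intro π _
    simp only [Finset.mem_product, Finset.mem_filter, Finset.mem_univ, true_and, and_true]
    exact isShuffle_mul_blockPerm π
  · rintro ⟨σ, e, f⟩ ha
    simp only [Finset.mem_product, Finset.mem_filter, Finset.mem_univ, true_and, and_true] at ha
    have h1 := sort1_shuffle_mul σ ha e f
    have h2 := sort2_shuffle_mul σ ha e f
    simp only [h1, h2, inv_inv]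
    refine Prod.ext ?_ (Prod.ext rfl rfl)
    simp only
    rw [mul_assoc, blockPerm_mul, mul_inv_cancel, mul_inv_cancel, blockPerm_one, mul_one]
  · intro π _
    simp only
    rw [mul_assoc, blockPerm_mul, mul_inv_cancel, mul_inv_cancel, blockPerm_one, mul_one]
  · rintro ⟨σ, e, f⟩ _
    rfl

end Key

section Rot

lemma rot_pow_val (M k : ℕ) (j : Fin M) :
    ((((finRotate M) ^ k : Equiv.Perm (Fin M))) j).val = (j.val + k) % M := by
  induction k with
  | zero => simp [Nat.mod_eq_of_lt j.isLt]
  | succ k ih =>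
    rw [pow_succ', Equiv.Perm.mul_apply]
    cases M with
    | zero => exact j.elim0
    | succ m =>
      rw [finRotate_succ_apply, Fin.add_def, ih, Fin.val_one',
        show j.val + (k + 1) = (j.val + k) + 1 by omega, Nat.add_mod (j.val + k) 1]

lemma sign_rot_pow_cast (M k : ℕ) :
    ((Equiv.Perm.sign ((finRotate M) ^ k) : ℤ) : ℝ) = (-1 : ℝ) ^ ((M - 1) * k) := by
  cases M with
  | zero =>
    have h : ((finRotate 0) ^ k) = 1 := Subsingleton.elim _ _
    rw [h]; simp
  | succ m =>
    rw [map_pow, sign_finRotate]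
    rw [show ((-1 : ℤˣ) ^ (m + 1 - 1)) ^ k = (-1 : ℤˣ) ^ (m * k) by rw [Nat.add_sub_cancel, pow_mul]]
    rw [show (m + 1 - 1) * k = m * k by simp]
    rcases Nat.even_or_odd (m * k) with he | ho
    · rw [he.neg_one_pow, he.neg_one_pow]; simp
    · rw [ho.neg_one_pow, ho.neg_one_pow]; simp

lemma neg_one_pow_parity (a b : ℕ) (hab : a % 2 = b % 2) : ((-1 : ℝ) ^ a = (-1 : ℝ) ^ b) := by
  rcases Nat.even_or_odd a with he | ho
  · have hb : Even b := by
      rcases Nat.even_or_odd b with h | h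
      · exact h
      · exfalso; rw [Nat.even_iff] at he; rw [Nat.odd_iff] at h; omega
    rw [he.neg_one_pow, hb.neg_one_pow]
  · have hb : Odd b := by
      rcases Nat.even_or_odd b with h | h
      · exfalso; rw [Nat.odd_iff] at ho; rw [Nat.even_iff] at h; omega
      · exact h
    rw [ho.neg_one_pow, hb.neg_one_pow]

end Rot

/-- The wedge product, via a bilinear pairing `μ : E → F → W`, of a `k`-form `A` and an
`l`-form `B` (given as functions on tuples of vectors):
`(A ∧^μ B)(v) = Σ_σ sgn(σ) μ(A(v_{σ(1)},…,v_{σ(k)}), B(v_{σ(k+1)},…,v_{σ(k+l)}))`,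
the sum ranging over `(k, l)`-shuffles `σ`. -/
def wedge {V E F W : Type*} [AddCommGroup W]
    (μ : E → F → W) {k l : ℕ}
    (A : (Fin k → V) → E) (B : (Fin l → V) → F) :
    (Fin (k + l) → V) → W :=
  fun v => ∑ σ : Equiv.Perm (Fin (k + l)),
    if IsShuffle k l σ then
      (Equiv.Perm.sign σ : ℤ) •
        μ (A fun i => v (σ (Fin.castAdd l i))) (B fun i => v (σ (Fin.natAdd k i)))
    else 0

section Full

variable {V E F G H W : Type*}
  [AddCommGroup V] [Module ℝ V]
  [AddCommGroup E] [Module ℝ E] [AddCommGroup F] [Module ℝ F]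
  [AddCommGroup G] [Module ℝ G] [AddCommGroup H] [Module ℝ H]
  [AddCommGroup W] [Module ℝ W]

lemma units_coe_sq (u : ℤˣ) : ((u : ℤ))^2 = 1 := by
  rw [sq, ← Units.val_mul, Int.units_mul_self, Units.val_one]

lemma bilin_zsmul (μ : E →ₗ[ℝ] F →ₗ[ℝ] W) (s t : ℤ) (a : E) (b : F) :
    μ (s • a) (t • b) = (s * t) • μ a b := by
  rw [map_zsmul μ s a, LinearMap.smul_apply, map_zsmul, smul_smul]

lemma full_two {k l : ℕ} (A : AlternatingMap ℝ V E (Fin k)) (B : AlternatingMap ℝ V F (Fin l))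
    (μ : E →ₗ[ℝ] F →ₗ[ℝ] W) (w : Fin (k + l) → V) :
    ∑ e : Equiv.Perm (Fin (k + l)), (Equiv.Perm.sign e : ℤ) •
        μ (A fun i => w (e (Fin.castAdd l i))) (B fun i => w (e (Fin.natAdd k i)))
      = (k.factorial * l.factorial) • wedge (fun a b => μ a b) ⇑A ⇑B w := by
  rw [key_sum]
  unfold wedge
  rw [Finset.smul_sum]
  refine Finset.sum_congr rfl fun σ _ => ?_
  by_cases hσ : IsShuffle k l σ
  · rw [if_pos hσ, if_pos hσ]
    have hterm : ∀ (e : Equiv.Perm (Fin k)) (f : Equiv.Perm (Fin l)),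
        (Equiv.Perm.sign (σ * blockPerm e f) : ℤ) •
          μ (A fun i => w ((σ * blockPerm e f) (Fin.castAdd l i)))
            (B fun i => w ((σ * blockPerm e f) (Fin.natAdd k i)))
        = (Equiv.Perm.sign σ : ℤ) •
          μ (A fun i => w (σ (Fin.castAdd l i))) (B fun i => w (σ (Fin.natAdd k i))) := by
      intro e f
      have hA : (fun i => w ((σ * blockPerm e f) (Fin.castAdd l i)))
          = (fun i => w (σ (Fin.castAdd l i))) ∘ e := by
        funext i; simp [Equiv.Perm.mul_apply]
      have hB : (fun i => w ((σ * blockPerm e f) (Fin.natAdd k i)))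
          = (fun i => w (σ (Fin.natAdd k i))) ∘ f := by
        funext i; simp [Equiv.Perm.mul_apply]
      rw [hA, hB, AlternatingMap.map_perm, AlternatingMap.map_perm,
        Units.smul_def, Units.smul_def, bilin_zsmul, smul_smul]
      congr 1
      have : Equiv.Perm.sign (σ * blockPerm e f)
          = Equiv.Perm.sign σ * (Equiv.Perm.sign e * Equiv.Perm.sign f) := by
        rw [map_mul, sign_blockPerm]
      rw [this]
      push_cast
      have h1 := units_coe_sq (Equiv.Perm.sign e)
      have h2 := units_coe_sq (Equiv.Perm.sign f)
      rw [sq] at h1 h2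
      calc (Equiv.Perm.sign σ : ℤ) * ((Equiv.Perm.sign e : ℤ) * (Equiv.Perm.sign f : ℤ))
            * ((Equiv.Perm.sign e : ℤ) * (Equiv.Perm.sign f : ℤ))
          = (Equiv.Perm.sign σ : ℤ) * (((Equiv.Perm.sign e : ℤ) * (Equiv.Perm.sign e : ℤ))
            * ((Equiv.Perm.sign f : ℤ) * (Equiv.Perm.sign f : ℤ))) := by ring
        _ = (Equiv.Perm.sign σ : ℤ) := by rw [h1, h2]; ring
    calc ∑ e : Equiv.Perm (Fin k), ∑ f : Equiv.Perm (Fin l),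
          (Equiv.Perm.sign (σ * blockPerm e f) : ℤ) •
            μ (A fun i => w ((σ * blockPerm e f) (Fin.castAdd l i)))
              (B fun i => w ((σ * blockPerm e f) (Fin.natAdd k i)))
        = ∑ _e : Equiv.Perm (Fin k), ∑ _f : Equiv.Perm (Fin l),
            (Equiv.Perm.sign σ : ℤ) •
              μ (A fun i => w (σ (Fin.castAdd l i))) (B fun i => w (σ (Fin.natAdd k i))) := by
          refine Finset.sum_congr rfl fun e _ => Finset.sum_congr rfl fun f _ => hterm e f
      _ = (k.factorial * l.factorial) • ((Equiv.Perm.sign σ : ℤ) •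
            μ (A fun i => w (σ (Fin.castAdd l i))) (B fun i => w (σ (Fin.natAdd k i)))) := by
          rw [Finset.sum_const, Finset.sum_const, smul_smul, Finset.card_univ,
            Finset.card_univ, Fintype.card_perm, Fintype.card_perm, Fintype.card_fin,
            Fintype.card_fin]
  · rw [if_neg hσ, if_neg hσ, smul_zero]

end Full
section Full3

variable {V E F G H W : Type*}
  [AddCommGroup V] [Module ℝ V]
  [AddCommGroup E] [Module ℝ E] [AddCommGroup F] [Module ℝ F]
  [AddCommGroup G] [Module ℝ G] [AddCommGroup H] [Module ℝ H]
  [AddCommGroup W] [Module ℝ W]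

lemma full_three_left {a b c : ℕ} (A : AlternatingMap ℝ V E (Fin a))
    (B : AlternatingMap ℝ V F (Fin b)) (Cc : AlternatingMap ℝ V G (Fin c))
    (ν : E →ₗ[ℝ] F →ₗ[ℝ] H) (μ : H →ₗ[ℝ] G →ₗ[ℝ] W) (v : Fin (a + b + c) → V) :
    ∑ π : Equiv.Perm (Fin (a + b + c)), (Equiv.Perm.sign π : ℤ) •
        μ (ν (A fun i => v (π (Fin.castAdd c (Fin.castAdd b i))))
             (B fun i => v (π (Fin.castAdd c (Fin.natAdd a i)))))
          (Cc fun i => v (π (Fin.natAdd (a + b) i)))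
      = (a.factorial * b.factorial * c.factorial) •
          wedge (fun x y => μ x y) (wedge (fun x y => ν x y) ⇑A ⇑B) ⇑Cc v := by
  rw [key_sum]
  conv_rhs => rw [wedge]
  rw [Finset.smul_sum]
  refine Finset.sum_congr rfl fun σ _ => ?_
  by_cases hσ : IsShuffle (a + b) c σ
  · rw [if_pos hσ, if_pos hσ]
    set w : Fin (a + b) → V := fun i => v (σ (Fin.castAdd c i)) with hw
    set u : Fin c → V := fun i => v (σ (Fin.natAdd (a + b) i)) with hu
    set y : G := Cc u with hy
    -- simplify each term
    have hterm : ∀ (e : Equiv.Perm (Fin (a + b))) (f : Equiv.Perm (Fin c)),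
        (Equiv.Perm.sign (σ * blockPerm e f) : ℤ) •
          μ (ν (A fun i => v ((σ * blockPerm e f) (Fin.castAdd c (Fin.castAdd b i))))
               (B fun i => v ((σ * blockPerm e f) (Fin.castAdd c (Fin.natAdd a i)))))
            (Cc fun i => v ((σ * blockPerm e f) (Fin.natAdd (a + b) i)))
        = (Equiv.Perm.sign σ : ℤ) • ((Equiv.Perm.sign e : ℤ) •
            μ (ν (A fun i => w (e (Fin.castAdd b i))) (B fun i => w (e (Fin.natAdd a i)))) y) := by
      intro e f
      have hC : (fun i => v ((σ * blockPerm e f) (Fin.natAdd (a + b) i))) = u ∘ f := by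
        funext i; simp [Equiv.Perm.mul_apply, hu]
      have hA : (fun i => v ((σ * blockPerm e f) (Fin.castAdd c (Fin.castAdd b i))))
          = fun i => w (e (Fin.castAdd b i)) := by
        funext i; simp [Equiv.Perm.mul_apply, hw]
      have hB : (fun i => v ((σ * blockPerm e f) (Fin.castAdd c (Fin.natAdd a i))))
          = fun i => w (e (Fin.natAdd a i)) := by
        funext i; simp [Equiv.Perm.mul_apply, hw]
      rw [hC, hA, hB, AlternatingMap.map_perm, Units.smul_def, map_zsmul, smul_smul, ← hy]
      have hsgn : (((Equiv.Perm.sign (σ * blockPerm e f) : ℤ)) * (Equiv.Perm.sign f : ℤ) : ℤ)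
          = (Equiv.Perm.sign σ : ℤ) * (Equiv.Perm.sign e : ℤ) := by
        rw [map_mul, sign_blockPerm]
        push_cast
        have h2 := units_coe_sq (Equiv.Perm.sign f)
        rw [sq] at h2
        calc (Equiv.Perm.sign σ : ℤ) * ((Equiv.Perm.sign e : ℤ) * (Equiv.Perm.sign f : ℤ))
              * (Equiv.Perm.sign f : ℤ)
            = (Equiv.Perm.sign σ : ℤ) * (Equiv.Perm.sign e : ℤ)
              * ((Equiv.Perm.sign f : ℤ) * (Equiv.Perm.sign f : ℤ)) := by ring
          _ = _ := by rw [h2]; ring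
      rw [hsgn, ← smul_smul]
    calc (∑ e : Equiv.Perm (Fin (a + b)), ∑ f : Equiv.Perm (Fin c),
          (Equiv.Perm.sign (σ * blockPerm e f) : ℤ) •
          μ (ν (A fun i => v ((σ * blockPerm e f) (Fin.castAdd c (Fin.castAdd b i))))
               (B fun i => v ((σ * blockPerm e f) (Fin.castAdd c (Fin.natAdd a i)))))
            (Cc fun i => v ((σ * blockPerm e f) (Fin.natAdd (a + b) i))))
        = ∑ e : Equiv.Perm (Fin (a + b)), (c.factorial : ℕ) • ((Equiv.Perm.sign σ : ℤ) •
            ((Equiv.Perm.sign e : ℤ) •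
              μ (ν (A fun i => w (e (Fin.castAdd b i))) (B fun i => w (e (Fin.natAdd a i)))) y)) := by
          refine Finset.sum_congr rfl fun e _ => ?_
          rw [Finset.sum_congr rfl fun f _ => hterm e f, Finset.sum_const, Finset.card_univ,
            Fintype.card_perm, Fintype.card_fin]
      _ = (c.factorial : ℕ) • ((Equiv.Perm.sign σ : ℤ) •
            ((μ.flip y) (∑ e : Equiv.Perm (Fin (a + b)), (Equiv.Perm.sign e : ℤ) •
              ν (A fun i => w (e (Fin.castAdd b i))) (B fun i => w (e (Fin.natAdd a i)))))) := by
          rw [← Finset.smul_sum, ← Finset.smul_sum, map_sum]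
          congr 2
          refine Finset.sum_congr rfl fun e _ => ?_
          rw [map_zsmul]
          rfl
      _ = (a.factorial * b.factorial * c.factorial) • ((Equiv.Perm.sign σ : ℤ) •
            μ (wedge (fun x y => ν x y) ⇑A ⇑B w) y) := by
          rw [full_two A B ν w, map_nsmul]
          rw [smul_comm ((Equiv.Perm.sign σ : ℤ)) (a.factorial * b.factorial)]
          rw [smul_smul]
          congr 1
          ring
  · rw [if_neg hσ, if_neg hσ, smul_zero]

lemma full_three_right {a b c : ℕ} (A : AlternatingMap ℝ V E (Fin a))
    (B : AlternatingMap ℝ V F (Fin b)) (Cc : AlternatingMap ℝ V G (Fin c))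
    (ν : F →ₗ[ℝ] G →ₗ[ℝ] H) (μ : E →ₗ[ℝ] H →ₗ[ℝ] W) (v : Fin (a + (b + c)) → V) :
    ∑ π : Equiv.Perm (Fin (a + (b + c))), (Equiv.Perm.sign π : ℤ) •
        μ (A fun i => v (π (Fin.castAdd (b + c) i)))
          (ν (B fun i => v (π (Fin.natAdd a (Fin.castAdd c i))))
             (Cc fun i => v (π (Fin.natAdd a (Fin.natAdd b i)))))
      = (a.factorial * b.factorial * c.factorial) •
          wedge (fun x y => μ x y) ⇑A (wedge (fun x y => ν x y) ⇑B ⇑Cc) v := by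
  rw [key_sum]
  conv_rhs => rw [wedge]
  rw [Finset.smul_sum]
  refine Finset.sum_congr rfl fun σ _ => ?_
  by_cases hσ : IsShuffle a (b + c) σ
  · rw [if_pos hσ, if_pos hσ]
    set w : Fin (b + c) → V := fun i => v (σ (Fin.natAdd a i)) with hw
    set u : Fin a → V := fun i => v (σ (Fin.castAdd (b + c) i)) with hu
    set x : E := A u with hx
    have hterm : ∀ (e : Equiv.Perm (Fin a)) (f : Equiv.Perm (Fin (b + c))),
        (Equiv.Perm.sign (σ * blockPerm e f) : ℤ) •
          μ (A fun i => v ((σ * blockPerm e f) (Fin.castAdd (b + c) i)))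
            (ν (B fun i => v ((σ * blockPerm e f) (Fin.natAdd a (Fin.castAdd c i))))
               (Cc fun i => v ((σ * blockPerm e f) (Fin.natAdd a (Fin.natAdd b i)))))
        = (Equiv.Perm.sign σ : ℤ) • ((Equiv.Perm.sign f : ℤ) •
            μ x (ν (B fun i => w (f (Fin.castAdd c i))) (Cc fun i => w (f (Fin.natAdd b i))))) := by
      intro e f
      have hA : (fun i => v ((σ * blockPerm e f) (Fin.castAdd (b + c) i))) = u ∘ e := by
        funext i; simp [Equiv.Perm.mul_apply, hu]
      have hB : (fun i => v ((σ * blockPerm e f) (Fin.natAdd a (Fin.castAdd c i))))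
          = fun i => w (f (Fin.castAdd c i)) := by
        funext i; simp [Equiv.Perm.mul_apply, hw]
      have hC : (fun i => v ((σ * blockPerm e f) (Fin.natAdd a (Fin.natAdd b i))))
          = fun i => w (f (Fin.natAdd b i)) := by
        funext i; simp [Equiv.Perm.mul_apply, hw]
      rw [hA, hB, hC, AlternatingMap.map_perm, Units.smul_def, ← hx]
      rw [map_zsmul μ, LinearMap.smul_apply, smul_smul]
      have hsgn : (((Equiv.Perm.sign (σ * blockPerm e f) : ℤ)) * (Equiv.Perm.sign e : ℤ) : ℤ)
          = (Equiv.Perm.sign σ : ℤ) * (Equiv.Perm.sign f : ℤ) := by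
        rw [map_mul, sign_blockPerm]
        push_cast
        have h2 := units_coe_sq (Equiv.Perm.sign e)
        rw [sq] at h2
        calc (Equiv.Perm.sign σ : ℤ) * ((Equiv.Perm.sign e : ℤ) * (Equiv.Perm.sign f : ℤ))
              * (Equiv.Perm.sign e : ℤ)
            = (Equiv.Perm.sign σ : ℤ) * (Equiv.Perm.sign f : ℤ)
              * ((Equiv.Perm.sign e : ℤ) * (Equiv.Perm.sign e : ℤ)) := by ring
          _ = _ := by rw [h2]; ring
      rw [hsgn, ← smul_smul]
    calc (∑ e : Equiv.Perm (Fin a), ∑ f : Equiv.Perm (Fin (b + c)),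
          (Equiv.Perm.sign (σ * blockPerm e f) : ℤ) •
          μ (A fun i => v ((σ * blockPerm e f) (Fin.castAdd (b + c) i)))
            (ν (B fun i => v ((σ * blockPerm e f) (Fin.natAdd a (Fin.castAdd c i))))
               (Cc fun i => v ((σ * blockPerm e f) (Fin.natAdd a (Fin.natAdd b i))))))
        = ∑ _e : Equiv.Perm (Fin a), ((Equiv.Perm.sign σ : ℤ) •
            ((μ x) (∑ f : Equiv.Perm (Fin (b + c)), (Equiv.Perm.sign f : ℤ) •
              ν (B fun i => w (f (Fin.castAdd c i))) (Cc fun i => w (f (Fin.natAdd b i)))))) := by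
          refine Finset.sum_congr rfl fun e _ => ?_
          rw [Finset.sum_congr rfl fun f _ => hterm e f, ← Finset.smul_sum, map_sum]
          congr 1
          exact Finset.sum_congr rfl fun f _ => (map_zsmul (μ x) _ _).symm
      _ = (a.factorial * b.factorial * c.factorial) • ((Equiv.Perm.sign σ : ℤ) •
            μ x (wedge (fun x y => ν x y) ⇑B ⇑Cc w)) := by
          rw [full_two B Cc ν w, map_nsmul, Finset.sum_const, Finset.card_univ,
            Fintype.card_perm, Fintype.card_fin]
          rw [smul_comm ((Equiv.Perm.sign σ : ℤ)) (b.factorial * c.factorial), smul_smul]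
          congr 1
          ring
  · rw [if_neg hσ, if_neg hσ, smul_zero]

end Full3
/-- Identify `m`-forms with `n`-forms along an equality `m = n` of arities. -/
def reindex {V W : Type*} {m n : ℕ} (h : m = n) (f : (Fin m → V) → W) :
    (Fin n → V) → W :=
  fun v => f fun i => v (Fin.cast h i)

/-- For bilinear maps `η₁, η₂ : l × h → h` satisfying
`⟨{Y, Y'}, Z⟩_l = - ⟨Y', η₁(Z, Y)⟩_h = - ⟨Y, η₂(Z, Y')⟩_h`, with `η̄ᵢ(C, B) := C ∧^{ηᵢ} B`,
one has `⟨B₁ ∧^{{,}} B₂, C⟩ = (-1)^(t₁(t₂+q)+1) ⟨B₂, η̄₁(C, B₁)⟩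
= (-1)^(t₂ q + 1) ⟨B₁, η̄₂(C, B₂)⟩`. -/
theorem etaBar_inner_identities {g h l V : Type*}
    [AddCommGroup h] [Module ℝ h] [AddCommGroup l] [Module ℝ l]
    [AddCommGroup V] [Module ℝ V]
    (P : h →ₗ[ℝ] h →ₗ[ℝ] l)
    (innh : h →ₗ[ℝ] h →ₗ[ℝ] ℝ) (innl : l →ₗ[ℝ] l →ₗ[ℝ] ℝ)
    (η₁ : l →ₗ[ℝ] h →ₗ[ℝ] h) (η₂ : l →ₗ[ℝ] h →ₗ[ℝ] h)
    (hη₁ : ∀ (Y Y' : h) (Z : l), innl (P Y Y') Z = - innh Y' (η₁ Z Y))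
    (hη₂ : ∀ (Y Y' : h) (Z : l), innl (P Y Y') Z = - innh Y (η₂ Z Y'))
    {t₁ t₂ q : ℕ} (B₁ : AlternatingMap ℝ V h (Fin t₁))
    (B₂ : AlternatingMap ℝ V h (Fin t₂)) (C : AlternatingMap ℝ V l (Fin q)) :
    wedge (fun Z Z' => innl Z Z') (wedge (fun Y Y' => P Y Y') ⇑B₁ ⇑B₂) ⇑C =
      ((-1 : ℝ) ^ (t₁ * (t₂ + q) + 1)) •
        reindex (by omega : t₂ + (q + t₁) = (t₁ + t₂) + q)
          (wedge (fun Y Y' => innh Y Y') ⇑B₂ (wedge (fun Z Y => η₁ Z Y) ⇑C ⇑B₁)) ∧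
    wedge (fun Z Z' => innl Z Z') (wedge (fun Y Y' => P Y Y') ⇑B₁ ⇑B₂) ⇑C =
      ((-1 : ℝ) ^ (t₂ * q + 1)) •
        reindex (by omega : t₁ + (q + t₂) = (t₁ + t₂) + q)
          (wedge (fun Y Y' => innh Y Y') ⇑B₁ (wedge (fun Z Y => η₂ Z Y) ⇑C ⇑B₂)) := by
  constructor
  · -- FIRST identity
    funext v
    have h₁ : t₂ + (q + t₁) = t₁ + t₂ + q := by omega
    set v' : Fin (t₂ + (q + t₁)) → V := fun i => v (Fin.cast h₁ i) with hv'
    set κ : Fin (t₂ + (q + t₁)) ≃ Fin (t₁ + t₂ + q) := finCongr h₁ with hκ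
    set ρ : Equiv.Perm (Fin (t₂ + (q + t₁))) := (finRotate (t₂ + (q + t₁))) ^ t₁ with hρ
    have hv'k : ∀ y, v' (κ.symm y) = v y := by
      intro y
      simp [hv', hκ]
    have hsρ : ((Equiv.Perm.sign ρ : ℤ) : ℝ) = (-1 : ℝ) ^ (t₁ * (t₂ + q)) := by
      rw [hρ, sign_rot_pow_cast]
      apply neg_one_pow_parity
      rcases Nat.mod_two_eq_zero_or_one t₁ with ht | ht
      · rw [Nat.mul_mod, Nat.mul_mod t₁, ht]; simp
      · have hX : (t₂ + (q + t₁) - 1) % 2 = (t₂ + q) % 2 := by omega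
        rw [Nat.mul_mod, Nat.mul_mod t₁, hX, ht, Nat.one_mul, Nat.mul_one]
    have block1 : ∀ i : Fin t₂, κ (ρ (Fin.castAdd (q + t₁) i)) =
        Fin.castAdd q (Fin.natAdd t₁ i) := by
      intro i
      have hi := i.isLt
      apply Fin.ext
      rw [hκ, hρ]
      simp only [finCongr_apply, Fin.coe_cast, Fin.coe_castAdd, Fin.coe_natAdd]
      rw [rot_pow_val]
      simp only [Fin.coe_castAdd]
      rw [Nat.mod_eq_of_lt (by omega)]
      omega
    have block2 : ∀ i : Fin q, κ (ρ (Fin.natAdd t₂ (Fin.castAdd t₁ i))) =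
        Fin.natAdd (t₁ + t₂) i := by
      intro i
      have hi := i.isLt
      apply Fin.ext
      rw [hκ, hρ]
      simp only [finCongr_apply, Fin.coe_cast, Fin.coe_castAdd, Fin.coe_natAdd]
      rw [rot_pow_val]
      simp only [Fin.coe_natAdd, Fin.coe_castAdd]
      rw [Nat.mod_eq_of_lt (by omega)]
      omega
    have block3 : ∀ i : Fin t₁, κ (ρ (Fin.natAdd t₂ (Fin.natAdd q i))) =
        Fin.castAdd q (Fin.castAdd t₂ i) := by
      intro i
      have hi := i.isLt
      apply Fin.ext
      rw [hκ, hρ]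
      simp only [finCongr_apply, Fin.coe_cast, Fin.coe_castAdd, Fin.coe_natAdd]
      rw [rot_pow_val]
      simp only [Fin.coe_natAdd]
      have he : t₂ + (q + ↑i) + t₁ = (t₂ + (q + t₁)) + ↑i := by omega
      rw [he, Nat.add_mod_left, Nat.mod_eq_of_lt (by omega)]
    -- the equivalence of permutation groups
    set Ψ : Equiv.Perm (Fin (t₁ + t₂ + q)) ≃ Equiv.Perm (Fin (t₂ + (q + t₁))) :=
      (Equiv.permCongr κ.symm).trans (Equiv.mulRight ρ) with hΨdef
    have hΨapp : ∀ (π : Equiv.Perm (Fin (t₁ + t₂ + q))) (x : Fin (t₂ + (q + t₁))),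
        (Ψ π) x = κ.symm (π (κ (ρ x))) := by
      intro π x
      rw [hΨdef]
      simp [Equiv.permCongr_apply, Equiv.Perm.mul_apply]
    have hΨsign : ∀ (π : Equiv.Perm (Fin (t₁ + t₂ + q))),
        Equiv.Perm.sign (Ψ π) = Equiv.Perm.sign π * Equiv.Perm.sign ρ := by
      intro π
      rw [hΨdef]
      simp only [Equiv.trans_apply, Equiv.coe_mulRight]
      rw [map_mul, Equiv.Perm.sign_permCongr]
    have HL := full_three_left B₁ B₂ C P innl v
    have HR := full_three_right B₂ C B₁ η₁ innh v'
    have hbridge :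
        (∑ π' : Equiv.Perm (Fin (t₂ + (q + t₁))), (Equiv.Perm.sign π' : ℤ) •
          innh (B₂ fun i => v' (π' (Fin.castAdd (q + t₁) i)))
            (η₁ (C fun i => v' (π' (Fin.natAdd t₂ (Fin.castAdd t₁ i))))
               (B₁ fun i => v' (π' (Fin.natAdd t₂ (Fin.natAdd q i)))))) =
        ((-1 : ℝ) ^ (t₁ * (t₂ + q) + 1)) *
          ∑ π : Equiv.Perm (Fin (t₁ + t₂ + q)), (Equiv.Perm.sign π : ℤ) •
            innl (P (B₁ fun i => v (π (Fin.castAdd q (Fin.castAdd t₂ i))))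
                    (B₂ fun i => v (π (Fin.castAdd q (Fin.natAdd t₁ i)))))
              (C fun i => v (π (Fin.natAdd (t₁ + t₂) i))) := by
      rw [Finset.mul_sum]
      symm
      apply Fintype.sum_equiv Ψ
      intro π
      have hX2 : (fun i => v' ((Ψ π) (Fin.castAdd (q + t₁) i))) =
          fun i => v (π (Fin.castAdd q (Fin.natAdd t₁ i))) := by
        funext i
        rw [hΨapp, block1, hv'k]
      have hX3 : (fun i => v' ((Ψ π) (Fin.natAdd t₂ (Fin.castAdd t₁ i)))) =
          fun i => v (π (Fin.natAdd (t₁ + t₂) i)) := by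
        funext i
        rw [hΨapp, block2, hv'k]
      have hX1 : (fun i => v' ((Ψ π) (Fin.natAdd t₂ (Fin.natAdd q i)))) =
          fun i => v (π (Fin.castAdd q (Fin.castAdd t₂ i))) := by
        funext i
        rw [hΨapp, block3, hv'k]
      rw [hX1, hX2, hX3, hΨsign]
      have hswap : innh (B₂ fun i => v (π (Fin.castAdd q (Fin.natAdd t₁ i))))
          (η₁ (C fun i => v (π (Fin.natAdd (t₁ + t₂) i)))
             (B₁ fun i => v (π (Fin.castAdd q (Fin.castAdd t₂ i))))) =
          - innl (P (B₁ fun i => v (π (Fin.castAdd q (Fin.castAdd t₂ i))))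
                    (B₂ fun i => v (π (Fin.castAdd q (Fin.natAdd t₁ i)))))
              (C fun i => v (π (Fin.natAdd (t₁ + t₂) i))) := by
        have := hη₁ (B₁ fun i => v (π (Fin.castAdd q (Fin.castAdd t₂ i))))
          (B₂ fun i => v (π (Fin.castAdd q (Fin.natAdd t₁ i))))
          (C fun i => v (π (Fin.natAdd (t₁ + t₂) i)))
        linarith
      rw [hswap]
      rw [zsmul_eq_mul, zsmul_eq_mul]
      push_cast
      rw [hsρ, pow_succ]
      ring
    -- assemble
    set L : ℝ := wedge (fun Z Z' => innl Z Z') (wedge (fun Y Y' => P Y Y') ⇑B₁ ⇑B₂) ⇑C v with hL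
    set R : ℝ := wedge (fun Y Y' => innh Y Y') ⇑B₂ (wedge (fun Z Y => η₁ Z Y) ⇑C ⇑B₁) v' with hR
    have key1 : ((t₂.factorial * q.factorial * t₁.factorial : ℕ) : ℝ) * R =
        ((-1 : ℝ) ^ (t₁ * (t₂ + q) + 1)) * (((t₁.factorial * t₂.factorial * q.factorial : ℕ) : ℝ) * L) := by
      rw [← nsmul_eq_mul, ← nsmul_eq_mul, ← HR, hbridge, HL]
    have hKne : ((t₁.factorial * t₂.factorial * q.factorial : ℕ) : ℝ) ≠ 0 := by
      have := Nat.factorial_pos t₁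
      have := Nat.factorial_pos t₂
      have := Nat.factorial_pos q
      positivity
    have hsq : (-1 : ℝ) ^ (t₁ * (t₂ + q) + 1) * (-1 : ℝ) ^ (t₁ * (t₂ + q) + 1) = 1 := by
      rw [← pow_add]
      exact Even.neg_one_pow ⟨t₁ * (t₂ + q) + 1, by ring⟩
    have hfin : ((t₁.factorial * t₂.factorial * q.factorial : ℕ) : ℝ) *
        ((-1 : ℝ) ^ (t₁ * (t₂ + q) + 1) * R) =
        ((t₁.factorial * t₂.factorial * q.factorial : ℕ) : ℝ) * L := by
      calc ((t₁.factorial * t₂.factorial * q.factorial : ℕ) : ℝ) *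
            ((-1 : ℝ) ^ (t₁ * (t₂ + q) + 1) * R)
          = (-1 : ℝ) ^ (t₁ * (t₂ + q) + 1) *
            (((t₂.factorial * q.factorial * t₁.factorial : ℕ) : ℝ) * R) := by
            push_cast; ring
        _ = (-1 : ℝ) ^ (t₁ * (t₂ + q) + 1) * ((-1 : ℝ) ^ (t₁ * (t₂ + q) + 1) *
            (((t₁.factorial * t₂.factorial * q.factorial : ℕ) : ℝ) * L)) := by rw [key1]
        _ = _ := by rw [← mul_assoc, hsq, one_mul]
    have final : L = (-1 : ℝ) ^ (t₁ * (t₂ + q) + 1) * R := (mul_left_cancel₀ hKne hfin).symm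
    simp only [Pi.smul_apply, smul_eq_mul, reindex]
    exact final
  · -- SECOND identity
    funext v
    have h₂ : t₁ + (q + t₂) = t₁ + t₂ + q := by omega
    set v' : Fin (t₁ + (q + t₂)) → V := fun i => v (Fin.cast h₂ i) with hv'
    set κ : Fin (t₁ + (q + t₂)) ≃ Fin (t₁ + t₂ + q) := finCongr h₂ with hκ
    set ρ : Equiv.Perm (Fin (t₁ + (q + t₂))) :=
      blockPerm (1 : Equiv.Perm (Fin t₁)) ((finRotate (q + t₂)) ^ t₂) with hρ
    have hv'k : ∀ y, v' (κ.symm y) = v y := by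
      intro y
      simp [hv', hκ]
    have hsρ : ((Equiv.Perm.sign ρ : ℤ) : ℝ) = (-1 : ℝ) ^ (t₂ * q) := by
      rw [hρ, sign_blockPerm, map_one, one_mul, sign_rot_pow_cast]
      apply neg_one_pow_parity
      rcases Nat.mod_two_eq_zero_or_one t₂ with ht | ht
      · rw [Nat.mul_mod, Nat.mul_mod t₂, ht]; simp
      · have hX : (q + t₂ - 1) % 2 = q % 2 := by omega
        rw [Nat.mul_mod, Nat.mul_mod t₂, hX, ht, Nat.one_mul, Nat.mul_one]
    have block1 : ∀ i : Fin t₁, κ (ρ (Fin.castAdd (q + t₂) i)) =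
        Fin.castAdd q (Fin.castAdd t₂ i) := by
      intro i
      apply Fin.ext
      rw [hκ, hρ, blockPerm_castAdd]
      simp
    have block2 : ∀ i : Fin q, κ (ρ (Fin.natAdd t₁ (Fin.castAdd t₂ i))) =
        Fin.natAdd (t₁ + t₂) i := by
      intro i
      have hi := i.isLt
      apply Fin.ext
      rw [hκ, hρ, blockPerm_natAdd]
      simp only [finCongr_apply, Fin.coe_cast, Fin.coe_natAdd]
      rw [rot_pow_val]
      simp only [Fin.coe_castAdd]
      rw [Nat.mod_eq_of_lt (by omega)]
      omega
    have block3 : ∀ i : Fin t₂, κ (ρ (Fin.natAdd t₁ (Fin.natAdd q i))) =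
        Fin.castAdd q (Fin.natAdd t₁ i) := by
      intro i
      have hi := i.isLt
      apply Fin.ext
      rw [hκ, hρ, blockPerm_natAdd]
      simp only [finCongr_apply, Fin.coe_cast, Fin.coe_natAdd, Fin.coe_castAdd]
      rw [rot_pow_val]
      simp only [Fin.coe_natAdd]
      have he : q + ↑i + t₂ = (q + t₂) + ↑i := by omega
      rw [he, Nat.add_mod_left, Nat.mod_eq_of_lt (by omega)]
    set Ψ : Equiv.Perm (Fin (t₁ + t₂ + q)) ≃ Equiv.Perm (Fin (t₁ + (q + t₂))) :=
      (Equiv.permCongr κ.symm).trans (Equiv.mulRight ρ) with hΨdef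
    have hΨapp : ∀ (π : Equiv.Perm (Fin (t₁ + t₂ + q))) (x : Fin (t₁ + (q + t₂))),
        (Ψ π) x = κ.symm (π (κ (ρ x))) := by
      intro π x
      rw [hΨdef]
      simp [Equiv.permCongr_apply, Equiv.Perm.mul_apply]
    have hΨsign : ∀ (π : Equiv.Perm (Fin (t₁ + t₂ + q))),
        Equiv.Perm.sign (Ψ π) = Equiv.Perm.sign π * Equiv.Perm.sign ρ := by
      intro π
      rw [hΨdef]
      simp only [Equiv.trans_apply, Equiv.coe_mulRight]
      rw [map_mul, Equiv.Perm.sign_permCongr]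
    have HL := full_three_left B₁ B₂ C P innl v
    have HR := full_three_right B₁ C B₂ η₂ innh v'
    have hbridge :
        (∑ π' : Equiv.Perm (Fin (t₁ + (q + t₂))), (Equiv.Perm.sign π' : ℤ) •
          innh (B₁ fun i => v' (π' (Fin.castAdd (q + t₂) i)))
            (η₂ (C fun i => v' (π' (Fin.natAdd t₁ (Fin.castAdd t₂ i))))
               (B₂ fun i => v' (π' (Fin.natAdd t₁ (Fin.natAdd q i)))))) =
        ((-1 : ℝ) ^ (t₂ * q + 1)) *
          ∑ π : Equiv.Perm (Fin (t₁ + t₂ + q)), (Equiv.Perm.sign π : ℤ) •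
            innl (P (B₁ fun i => v (π (Fin.castAdd q (Fin.castAdd t₂ i))))
                    (B₂ fun i => v (π (Fin.castAdd q (Fin.natAdd t₁ i)))))
              (C fun i => v (π (Fin.natAdd (t₁ + t₂) i))) := by
      rw [Finset.mul_sum]
      symm
      apply Fintype.sum_equiv Ψ
      intro π
      have hX1 : (fun i => v' ((Ψ π) (Fin.castAdd (q + t₂) i))) =
          fun i => v (π (Fin.castAdd q (Fin.castAdd t₂ i))) := by
        funext i
        rw [hΨapp, block1, hv'k]
      have hX3 : (fun i => v' ((Ψ π) (Fin.natAdd t₁ (Fin.castAdd t₂ i)))) =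
          fun i => v (π (Fin.natAdd (t₁ + t₂) i)) := by
        funext i
        rw [hΨapp, block2, hv'k]
      have hX2 : (fun i => v' ((Ψ π) (Fin.natAdd t₁ (Fin.natAdd q i)))) =
          fun i => v (π (Fin.castAdd q (Fin.natAdd t₁ i))) := by
        funext i
        rw [hΨapp, block3, hv'k]
      rw [hX1, hX2, hX3, hΨsign]
      have hswap : innh (B₁ fun i => v (π (Fin.castAdd q (Fin.castAdd t₂ i))))
          (η₂ (C fun i => v (π (Fin.natAdd (t₁ + t₂) i)))
             (B₂ fun i => v (π (Fin.castAdd q (Fin.natAdd t₁ i))))) =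
          - innl (P (B₁ fun i => v (π (Fin.castAdd q (Fin.castAdd t₂ i))))
                    (B₂ fun i => v (π (Fin.castAdd q (Fin.natAdd t₁ i)))))
              (C fun i => v (π (Fin.natAdd (t₁ + t₂) i))) := by
        have := hη₂ (B₁ fun i => v (π (Fin.castAdd q (Fin.castAdd t₂ i))))
          (B₂ fun i => v (π (Fin.castAdd q (Fin.natAdd t₁ i))))
          (C fun i => v (π (Fin.natAdd (t₁ + t₂) i)))
        linarith
      rw [hswap]
      rw [zsmul_eq_mul, zsmul_eq_mul]
      push_cast
      rw [hsρ, pow_succ]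
      ring
    set L : ℝ := wedge (fun Z Z' => innl Z Z') (wedge (fun Y Y' => P Y Y') ⇑B₁ ⇑B₂) ⇑C v with hL
    set R : ℝ := wedge (fun Y Y' => innh Y Y') ⇑B₁ (wedge (fun Z Y => η₂ Z Y) ⇑C ⇑B₂) v' with hR
    have key1 : ((t₁.factorial * q.factorial * t₂.factorial : ℕ) : ℝ) * R =
        ((-1 : ℝ) ^ (t₂ * q + 1)) * (((t₁.factorial * t₂.factorial * q.factorial : ℕ) : ℝ) * L) := by
      rw [← nsmul_eq_mul, ← nsmul_eq_mul, ← HR, hbridge, HL]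
    have hKne : ((t₁.factorial * t₂.factorial * q.factorial : ℕ) : ℝ) ≠ 0 := by
      have := Nat.factorial_pos t₁
      have := Nat.factorial_pos t₂
      have := Nat.factorial_pos q
      positivity
    have hsq : (-1 : ℝ) ^ (t₂ * q + 1) * (-1 : ℝ) ^ (t₂ * q + 1) = 1 := by
      rw [← pow_add]
      exact Even.neg_one_pow ⟨t₂ * q + 1, by ring⟩
    have hfin : ((t₁.factorial * t₂.factorial * q.factorial : ℕ) : ℝ) *
        ((-1 : ℝ) ^ (t₂ * q + 1) * R) =
        ((t₁.factorial * t₂.factorial * q.factorial : ℕ) : ℝ) * L := by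
      calc ((t₁.factorial * t₂.factorial * q.factorial : ℕ) : ℝ) *
            ((-1 : ℝ) ^ (t₂ * q + 1) * R)
          = (-1 : ℝ) ^ (t₂ * q + 1) *
            (((t₁.factorial * q.factorial * t₂.factorial : ℕ) : ℝ) * R) := by
            push_cast; ring
        _ = (-1 : ℝ) ^ (t₂ * q + 1) * ((-1 : ℝ) ^ (t₂ * q + 1) *
            (((t₁.factorial * t₂.factorial * q.factorial : ℕ) : ℝ) * L)) := by rw [key1]
        _ = _ := by rw [← mul_assoc, hsq, one_mul]
    have final : L = (-1 : ℝ) ^ (t₂ * q + 1) * R := (mul_left_cancel₀ hKne hfin).symm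
    simp only [Pi.smul_apply, smul_eq_mul, reindex]
    exact final
end

section
/- Let (l, h, g; β, α, ▷, {,}) be a differential 2-crossed module and define the induced action Y ▷' Z := −{β(Z), Y} of h on l. Then ▷' acts by derivations of the bracket of l: for all Y ∈ h and Z₁, Z₂ ∈ l, Y ▷' [Z₁, Z₂] = [Y ▷' Z₁, Z₂] + [Z₁, Y ▷' Z₂]. -/
/-- In a differential 2-crossed module, the induced action `Y ▷' Z := -{β(Z), Y}` of `h`
on `l` acts by derivations: `Y ▷' [Z₁, Z₂] = [Y ▷' Z₁, Z₂] + [Z₁, Y ▷' Z₂]`. -/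
theorem inducedAction_derivation
    {l h g : Type*} [LieRing l] [LieAlgebra ℝ l] [LieRing h] [LieAlgebra ℝ h]
    [LieRing g] [LieAlgebra ℝ g]
    (β : l →ₗ[ℝ] h) (β_bracket : ∀ Z Z' : l, β ⁅Z, Z'⁆ = ⁅β Z, β Z'⁆)
    (α : h →ₗ[ℝ] g) (α_bracket : ∀ Y Y' : h, α ⁅Y, Y'⁆ = ⁅α Y, α Y'⁆)
    (αβ : ∀ Z : l, α (β Z) = 0)
    (actH : g →ₗ[ℝ] h →ₗ[ℝ] h) (actL : g →ₗ[ℝ] l →ₗ[ℝ] l)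
    (actH_der : ∀ (X : g) (Y₁ Y₂ : h),
      actH X ⁅Y₁, Y₂⁆ = ⁅actH X Y₁, Y₂⁆ + ⁅Y₁, actH X Y₂⁆)
    (actL_der : ∀ (X : g) (Z₁ Z₂ : l),
      actL X ⁅Z₁, Z₂⁆ = ⁅actL X Z₁, Z₂⁆ + ⁅Z₁, actL X Z₂⁆)
    (actH_lie : ∀ (X₁ X₂ : g) (Y : h),
      actH ⁅X₁, X₂⁆ Y = actH X₁ (actH X₂ Y) - actH X₂ (actH X₁ Y))
    (actL_lie : ∀ (X₁ X₂ : g) (Z : l),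
      actL ⁅X₁, X₂⁆ Z = actL X₁ (actL X₂ Z) - actL X₂ (actL X₁ Z))
    (β_equiv : ∀ (X : g) (Z : l), β (actL X Z) = actH X (β Z))
    (α_equiv : ∀ (X : g) (Y : h), α (actH X Y) = ⁅X, α Y⁆)
    (P : h →ₗ[ℝ] h →ₗ[ℝ] l)
    (P_equiv : ∀ (X : g) (Y₁ Y₂ : h),
      actL X (P Y₁ Y₂) = P (actH X Y₁) Y₂ + P Y₁ (actH X Y₂))
    (P_beta : ∀ Y₁ Y₂ : h, β (P Y₁ Y₂) = ⁅Y₁, Y₂⁆ - actH (α Y₁) Y₂)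
    (P_bracketL : ∀ Z₁ Z₂ : l, ⁅Z₁, Z₂⁆ = P (β Z₁) (β Z₂))
    (P_bracketH₁ : ∀ Y₁ Y₂ Y₃ : h,
      P ⁅Y₁, Y₂⁆ Y₃ = actL (α Y₁) (P Y₂ Y₃) + P Y₁ ⁅Y₂, Y₃⁆
        - actL (α Y₂) (P Y₁ Y₃) - P Y₂ ⁅Y₁, Y₃⁆)
    (P_bracketH₂ : ∀ Y₁ Y₂ Y₃ : h,
      P Y₁ ⁅Y₂, Y₃⁆ = P (β (P Y₁ Y₂)) Y₃ - P (β (P Y₁ Y₃)) Y₂)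
    (P_six : ∀ (Y : h) (Z : l), P (β Z) Y + P Y (β Z) = - actL (α Y) Z)
    : ∀ (Y : h) (Z₁ Z₂ : l),
      -(P (β ⁅Z₁, Z₂⁆) Y) = ⁅-(P (β Z₁) Y), Z₂⁆ + ⁅Z₁, -(P (β Z₂) Y)⁆ := by
  intro Y Z₁ Z₂
  have h1 : P (β ⁅Z₁, Z₂⁆) Y = P (β Z₁) ⁅β Z₂, Y⁆ - P (β Z₂) ⁅β Z₁, Y⁆ := by
    rw [β_bracket, P_bracketH₁]
    simp [αβ]
  have h2 : P (β Z₁) ⁅β Z₂, Y⁆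
      = P (β ⁅Z₁, Z₂⁆) Y - ⁅P (β Z₁) Y, Z₂⁆ := by
    rw [P_bracketH₂, ← P_bracketL, ← P_bracketL]
  have h3 : P (β Z₂) ⁅β Z₁, Y⁆
      = -(P (β ⁅Z₁, Z₂⁆) Y) - ⁅P (β Z₂) Y, Z₁⁆ := by
    have hsk : (⁅Z₂, Z₁⁆ : l) = -⁅Z₁, Z₂⁆ := by rw [← lie_skew Z₂ Z₁]
    rw [P_bracketH₂, ← P_bracketL, ← P_bracketL, hsk, map_neg, map_neg,
      LinearMap.neg_apply]
  rw [h2, h3] at h1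
  have h4 : P (β ⁅Z₁, Z₂⁆) Y = ⁅P (β Z₁) Y, Z₂⁆ - ⁅P (β Z₂) Y, Z₁⁆ := by
    have h5 : P (β ⁅Z₁, Z₂⁆) Y
        - (P (β ⁅Z₁, Z₂⁆) Y - ⁅P (β Z₁) Y, Z₂⁆
          - (-(P (β ⁅Z₁, Z₂⁆) Y) - ⁅P (β Z₂) Y, Z₁⁆)) = 0 := sub_eq_zero.mpr h1
    have h6 : P (β ⁅Z₁, Z₂⁆) Y
        - (P (β ⁅Z₁, Z₂⁆) Y - ⁅P (β Z₁) Y, Z₂⁆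
          - (-(P (β ⁅Z₁, Z₂⁆) Y) - ⁅P (β Z₂) Y, Z₁⁆))
        = -(P (β ⁅Z₁, Z₂⁆) Y - (⁅P (β Z₁) Y, Z₂⁆ - ⁅P (β Z₂) Y, Z₁⁆)) := by abel
    rw [h6, neg_eq_zero, sub_eq_zero] at h5
    exact h5
  rw [h4]
  simp only [LinearMap.neg_apply, neg_lie, lie_neg, neg_sub, ← lie_skew Z₁ (P (β Z₂) Y)]
  abel
end
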